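/- arXiv:1611.10299 — 2 statements merged into one kernel-verified Lean document; each statement's English description precedes it below -/
import Mathlib

section
/- If p = p(n) ≫ ((log n)/n)^{1/2}, then asymptotically almost surely G ∈ G(n,p) satisfies: for every vertex v ∈ V(G) and every J ⊆ N_G(v) with |J| ≥ pn/100, all but at most 100/p vertices x ∈ V(G) \ J satisfy |N_G(x) ∩ J| > p²n/200. -/
open MeasureTheory Filter Topology SimpleGraph

namespace MonochromaticTrees

variable {V : Type*} {C : Type*}

/-- A subgraph `T` of `G` is a *monochromatic tree* with respect to the
edge-colouring `φ` if it is either empty or a tree, and all of its edges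
receive the same colour under `φ`. -/
def IsMonoTree (G : SimpleGraph V) (φ : Sym2 V → C) (T : G.Subgraph) : Prop :=
  (T.verts = ∅ ∨ T.coe.IsTree) ∧ ∃ c : C, ∀ e ∈ T.edgeSet, φ e = c

/-- `φ → Π₂`: the vertex set can be partitioned into the vertex sets of two
monochromatic trees. -/
def MonoTreePartition2 (G : SimpleGraph V) (φ : Sym2 V → Bool) : Prop :=
  ∃ T₁ T₂ : G.Subgraph, IsMonoTree G φ T₁ ∧ IsMonoTree G φ T₂ ∧
    Disjoint T₁.verts T₂.verts ∧ T₁.verts ∪ T₂.verts = Set.univ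

/-- `G → Π₂`: every 2-colouring of the edges admits a partition of the vertex
set into the vertex sets of two monochromatic trees. -/
def ArrowPi2 (G : SimpleGraph V) : Prop :=
  ∀ φ : Sym2 V → Bool, MonoTreePartition2 G φ

/-- Partition of the vertex set into the vertex sets of `r` monochromatic
trees for an `r`-colouring `φ`. -/
def MonoTreePartitionR (G : SimpleGraph V) (r : ℕ) (φ : Sym2 V → Fin r) : Prop :=
  ∃ T : Fin r → G.Subgraph, (∀ i, IsMonoTree G φ (T i)) ∧
    (Set.univ.PairwiseDisjoint fun i => (T i).verts) ∧ (⋃ i, (T i).verts) = Set.univ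

/-- `G → Π_r`. -/
def ArrowPiR (G : SimpleGraph V) (r : ℕ) : Prop :=
  ∀ φ : Sym2 V → Fin r, MonoTreePartitionR G r φ

/-- There is a monochromatic `u`–`v` path. -/
def MonoPath (G : SimpleGraph V) (φ : Sym2 V → C) (u v : V) : Prop :=
  ∃ w : G.Walk u v, w.IsPath ∧ ∃ c : C, ∀ e ∈ w.edges, φ e = c

/-- The spanning subgraph of `G` consisting of the edges of colour `c`. -/
def colourGraph (G : SimpleGraph V) (φ : Sym2 V → Bool) (c : Bool) : SimpleGraph V :=
  SimpleGraph.fromEdgeSet {e | e ∈ G.edgeSet ∧ φ e = c}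

/-- The set `R^φ` (for `c = true`, i.e. red) resp. `B^φ` (for `c = false`,
i.e. blue) of vertices `v` with `d_c(v) > d(v)/3`. -/
def bigColourSet (G : SimpleGraph V) (φ : Sym2 V → Bool) (c : Bool) : Set V :=
  {v | (G.neighborSet v).ncard < 3 * ((colourGraph G φ c).neighborSet v).ncard}

/-- A colouring is extremal if there are distinct `r ∈ R^φ`, `b ∈ B^φ` with no
monochromatic `r`–`b` path. -/
def Extremal (G : SimpleGraph V) (φ : Sym2 V → Bool) : Prop :=
  ∃ r ∈ bigColourSet G φ true, ∃ b ∈ bigColourSet G φ false,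
    r ≠ b ∧ ¬ MonoPath G φ r b

/-- The number of edges of `G` with one endpoint in `U` and the other in `W`. -/
noncomputable def edgesBetween (G : SimpleGraph V) (U W : Set V) : ℕ :=
  {e ∈ G.edgeSet | ∃ u ∈ U, ∃ w ∈ W, e = s(u, w)}.ncard

/-- The number of edges of `G` with both endpoints in `A`. -/
noncomputable def edgesWithin (G : SimpleGraph V) (A : Set V) : ℕ :=
  {e ∈ G.edgeSet | ∀ v ∈ e, v ∈ A}.ncard

/-- The distribution of the binomial random graph `G(n,p)`: each potential
edge appears independently with probability `p`. -/
noncomputable def gnp (n : ℕ) (p : ℝ) : Measure (Sym2 (Fin n) → Bool) :=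
  Measure.pi fun _ => (PMF.bernoulli (min (Real.toNNReal p) 1) (min_le_right _ _)).toMeasure

/-- The graph encoded by an outcome `ω` of the edge indicators. -/
def graphOf {n : ℕ} (ω : Sym2 (Fin n) → Bool) : SimpleGraph (Fin n) :=
  SimpleGraph.fromEdgeSet {e | ω e = true}


variable {n : ℕ} {p : ℝ}

instance : IsProbabilityMeasure (gnp n p) := by
  unfold gnp; infer_instance

lemma meas_all (E : Set (Sym2 (Fin n) → Bool)) : MeasurableSet E := by
  have : E = ⋃ ω ∈ E, {ω} := by simp
  rw [this]
  exact MeasurableSet.biUnion (Set.to_countable E) (fun ω _ => measurableSet_singleton ω)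

lemma gnp_singleton (hp0 : 0 ≤ p) (hp1 : p ≤ 1) (ω : Sym2 (Fin n) → Bool) :
    gnp n p {ω} = ∏ e : Sym2 (Fin n),
      (if ω e then ENNReal.ofReal p else 1 - ENNReal.ofReal p) := by
  have hmin : min (Real.toNNReal p) 1 = Real.toNNReal p :=
    min_eq_left (Real.toNNReal_le_one.2 hp1)
  rw [← Set.univ_pi_singleton ω]
  rw [gnp, Measure.pi_pi]
  refine Finset.prod_congr rfl fun e _ => ?_
  rw [PMF.toMeasure_apply_singleton _ _ (measurableSet_singleton _), PMF.bernoulli_apply, hmin]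
  cases h : ω e <;> simp [ENNReal.ofReal]

lemma gnp_apply (E : Set (Sym2 (Fin n) → Bool)) :
    gnp n p E = ∑ ω ∈ (Set.toFinite E).toFinset, gnp n p {ω} := by
  classical
  have h : E = ⋃ ω ∈ (Set.toFinite E).toFinset, ({ω} : Set _) := by
    ext x; simp [Set.Finite.mem_toFinset]
  nth_rewrite 1 [h]
  rw [measure_biUnion_finset]
  · intro a _ b _ hab
    exact Set.disjoint_singleton.2 hab
  · exact fun _ _ => measurableSet_singleton _

open scoped ENNReal

lemma master (hp0 : 0 ≤ p) (hp1 : p ≤ 1) (E : Set (Sym2 (Fin n) → Bool))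
    (g : Sym2 (Fin n) → Bool → ℝ≥0∞) (c : ℝ≥0∞)
    (h : ∀ ω ∈ E, 1 ≤ c * ∏ e : Sym2 (Fin n), g e (ω e)) :
    gnp n p E ≤ c * ∏ e : Sym2 (Fin n),
      ((1 - ENNReal.ofReal p) * g e false + ENNReal.ofReal p * g e true) := by
  classical
  rw [gnp_apply]
  have key : ∀ ω ∈ (Set.toFinite E).toFinset, gnp n p {ω} ≤
      c * ∏ e : Sym2 (Fin n),
        (g e (ω e) * (if ω e then ENNReal.ofReal p else 1 - ENNReal.ofReal p)) := by
    intro ω hω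
    rw [Set.Finite.mem_toFinset] at hω
    rw [gnp_singleton hp0 hp1]
    calc ∏ e : Sym2 (Fin n), (if ω e then ENNReal.ofReal p else 1 - ENNReal.ofReal p)
        = 1 * ∏ e : Sym2 (Fin n), (if ω e then ENNReal.ofReal p else 1 - ENNReal.ofReal p) := by
          rw [one_mul]
      _ ≤ (c * ∏ e : Sym2 (Fin n), g e (ω e)) *
            ∏ e : Sym2 (Fin n), (if ω e then ENNReal.ofReal p else 1 - ENNReal.ofReal p) :=
          mul_le_mul_left (h ω hω) _
      _ = c * ∏ e : Sym2 (Fin n),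
            (g e (ω e) * (if ω e then ENNReal.ofReal p else 1 - ENNReal.ofReal p)) := by
          rw [mul_assoc, ← Finset.prod_mul_distrib]
  calc ∑ ω ∈ (Set.toFinite E).toFinset, gnp n p {ω}
      ≤ ∑ ω ∈ (Set.toFinite E).toFinset, c * ∏ e : Sym2 (Fin n),
          (g e (ω e) * (if ω e then ENNReal.ofReal p else 1 - ENNReal.ofReal p)) :=
        Finset.sum_le_sum key
    _ ≤ ∑ ω : Sym2 (Fin n) → Bool, c * ∏ e : Sym2 (Fin n),
          (g e (ω e) * (if ω e then ENNReal.ofReal p else 1 - ENNReal.ofReal p)) :=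
        Finset.sum_le_sum_of_subset (Finset.subset_univ _)
    _ = c * ∑ ω : Sym2 (Fin n) → Bool, ∏ e : Sym2 (Fin n),
          (g e (ω e) * (if ω e then ENNReal.ofReal p else 1 - ENNReal.ofReal p)) := by
        rw [Finset.mul_sum]
    _ = c * ∏ e : Sym2 (Fin n), ∑ b : Bool,
          (g e b * (if b then ENNReal.ofReal p else 1 - ENNReal.ofReal p)) := by
        rw [Fintype.prod_sum]
    _ = c * ∏ e : Sym2 (Fin n),
          ((1 - ENNReal.ofReal p) * g e false + ENNReal.ofReal p * g e true) := by
        congr 1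
        refine Finset.prod_congr rfl fun e _ => ?_
        simp [Fintype.sum_bool, mul_comm, add_comm]

def elemEvent (n : ℕ) (v : Fin n) (J A : Finset (Fin n)) (t : ℕ) :
    Set (Sym2 (Fin n) → Bool) :=
  {ω | (∀ u ∈ J, ω s(v, u) = true) ∧
       (∑ a ∈ A, ∑ u ∈ J, (if ω s(a, u) then 1 else 0 : ℕ)) ≤ t}

lemma elem_bound (hp0 : 0 ≤ p) (hp1 : p ≤ 1) (v : Fin n) (J A : Finset (Fin n)) (t : ℕ)
    (hvJ : v ∉ J) (hvA : v ∉ A) (hAJ : Disjoint A J) :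
    gnp n p (elemEvent n v J A t) ≤
      2 ^ t * ENNReal.ofReal ((p ^ J.card) * (1 - p / 2) ^ (A.card * J.card)) := by
  classical
  set q := ENNReal.ofReal p with hq
  have hq1 : q ≤ 1 := ENNReal.ofReal_le_one.2 hp1
  set r : ℝ≥0∞ := (1 - q) + q * 2⁻¹ with hr
  set S₁ : Finset (Sym2 (Fin n)) := J.image (fun u => s(v, u)) with hS₁
  set S₂ : Finset (Sym2 (Fin n)) := (A ×ˢ J).image (fun q => s(q.1, q.2)) with hS₂
  have inj2 : Set.InjOn (fun q : Fin n × Fin n => s(q.1, q.2)) ↑(A ×ˢ J) := by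
    rintro ⟨a, u⟩ hau ⟨a', u'⟩ hau' h
    simp only [Finset.mem_coe, Finset.mem_product] at hau hau'
    simp only [Sym2.eq_iff] at h
    obtain ⟨rfl, rfl⟩ | ⟨rfl, rfl⟩ := h
    · rfl
    · exact absurd hau.2 (Finset.disjoint_left.1 hAJ hau'.1)
  have hcard1 : S₁.card = J.card := by
    rw [hS₁, Finset.card_image_of_injective _ fun a b h => by rwa [Sym2.congr_right] at h]
  have hcard2 : S₂.card = A.card * J.card := by
    rw [hS₂, Finset.card_image_of_injOn inj2, Finset.card_product]
  have hmem1 : ∀ u ∈ J, s(v, u) ∈ S₁ := fun u hu => Finset.mem_image_of_mem _ hu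
  have hdisj : Disjoint S₁ S₂ := by
    rw [Finset.disjoint_left]
    intro e he1 he2
    rw [hS₁, Finset.mem_image] at he1
    obtain ⟨u, hu, rfl⟩ := he1
    rw [hS₂, Finset.mem_image] at he2
    obtain ⟨⟨a, u'⟩, hau, h⟩ := he2
    rw [Finset.mem_product] at hau
    rw [Sym2.eq_iff] at h
    rcases h with ⟨h1, h2⟩ | ⟨h1, h2⟩
    · exact hvA (h1 ▸ hau.1)
    · exact hvJ (h2 ▸ hau.2)
  set g : Sym2 (Fin n) → Bool → ℝ≥0∞ := fun e b =>
    if e ∈ S₁ then (if b then 1 else 0) else if e ∈ S₂ then (if b then 2⁻¹ else 1) else 1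
    with hg
  have hg1 : ∀ e ∈ S₁, ∀ b, g e b = (if b then 1 else 0) := by
    intro e he b; rw [hg]; simp [he]
  have hg2 : ∀ e ∈ S₂, ∀ b, g e b = (if b then 2⁻¹ else 1) := by
    intro e he b; rw [hg]; simp [Finset.disjoint_right.1 hdisj he, he]
  have hg0 : ∀ e, e ∉ S₁ → e ∉ S₂ → ∀ b, g e b = 1 := by
    intro e he1 he2 b; rw [hg]; simp [he1, he2]
  have key := master hp0 hp1 (elemEvent n v J A t) g (2 ^ t) ?_
  · refine key.trans (le_of_eq ?_)
    congr 1
    have hsplit : ∀ F : Sym2 (Fin n) → ℝ≥0∞, (∀ e, e ∉ S₁ → e ∉ S₂ → F e = 1) →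
        (∏ e : Sym2 (Fin n), F e) = (∏ e ∈ S₁, F e) * ∏ e ∈ S₂, F e := by
      intro F hF
      rw [← Finset.prod_union hdisj]
      refine (Finset.prod_subset (Finset.subset_univ _) ?_).symm
      intro e _ he
      simp only [Finset.mem_union, not_or] at he
      exact hF e he.1 he.2
    simp only [← hq]
    rw [hsplit _ (fun e he1 he2 => by rw [hg0 e he1 he2, hg0 e he1 he2, mul_one, mul_one,
      tsub_add_cancel_of_le hq1])]
    have e1 : (∏ e ∈ S₁, ((1 - q) * g e false + q * g e true)) = q ^ J.card := by
      rw [Finset.prod_congr rfl (fun e he => by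
        rw [hg1 e he, hg1 e he]; simp : ∀ e ∈ S₁, ((1 - q) * g e false + q * g e true) = q),
        Finset.prod_const, hcard1]
    have e2 : (∏ e ∈ S₂, ((1 - q) * g e false + q * g e true)) = r ^ (A.card * J.card) := by
      rw [Finset.prod_congr rfl (fun e he => by
        rw [hg2 e he, hg2 e he]; simp [hr] : ∀ e ∈ S₂, ((1 - q) * g e false + q * g e true) = r),
        Finset.prod_const, hcard2]
    rw [e1, e2]
    have hr' : r = ENNReal.ofReal (1 - p / 2) := by
      have h1 : (1 : ℝ) - p / 2 = (1 - p) + p * (2 : ℝ)⁻¹ := by ring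
      have e3 : ENNReal.ofReal (1 - p) = 1 - q := by
        rw [ENNReal.ofReal_sub _ hp0, ENNReal.ofReal_one]
      have e4 : ENNReal.ofReal (p * (2 : ℝ)⁻¹) = q * 2⁻¹ := by
        rw [ENNReal.ofReal_mul hp0]
        congr 1
        rw [ENNReal.ofReal_inv_of_pos (by norm_num)]
        norm_num
      rw [hr, h1, ENNReal.ofReal_add (by linarith) (by positivity), e3, e4]
    rw [hr', ENNReal.ofReal_mul (by positivity), ENNReal.ofReal_pow hp0,
      ENNReal.ofReal_pow (by linarith)]
  · -- pointwise bound
    intro ω hω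
    obtain ⟨h1, h2⟩ := hω
    have hX : (S₂.filter (fun e => ω e = true)).card ≤ t := by
      refine le_trans (le_of_eq ?_) h2
      rw [← Finset.sum_product']
      rw [show (∑ q ∈ A ×ˢ J, if ω s(q.1, q.2) then 1 else 0) =
          ((A ×ˢ J).filter (fun q => ω s(q.1, q.2) = true)).card by
        rw [Finset.card_filter]]
      rw [hS₂, Finset.filter_image, Finset.card_image_of_injOn
        (inj2.mono (Finset.coe_subset.2 (Finset.filter_subset _ _)))]
    have hprod : (∏ e : Sym2 (Fin n), g e (ω e)) =
        ∏ e ∈ S₂, (if ω e then (2 : ℝ≥0∞)⁻¹ else 1) := by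
      calc (∏ e : Sym2 (Fin n), g e (ω e))
          = ∏ e ∈ S₁ ∪ S₂, g e (ω e) := by
            refine (Finset.prod_subset (Finset.subset_univ _) ?_).symm
            intro e _ he
            simp only [Finset.mem_union, not_or] at he
            exact hg0 e he.1 he.2 _
        _ = (∏ e ∈ S₁, g e (ω e)) * ∏ e ∈ S₂, g e (ω e) := Finset.prod_union hdisj
        _ = 1 * ∏ e ∈ S₂, (if ω e then (2 : ℝ≥0∞)⁻¹ else 1) := by
            congr 1
            · refine Finset.prod_eq_one fun e he => ?_
              rw [hg1 e he]
              rw [hS₁, Finset.mem_image] at he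
              obtain ⟨u, hu, rfl⟩ := he
              rw [h1 u hu]
              simp
            · exact Finset.prod_congr rfl fun e he => hg2 e he _
        _ = ∏ e ∈ S₂, (if ω e then (2 : ℝ≥0∞)⁻¹ else 1) := one_mul _
    rw [hprod]
    have hsplit2 : (∏ e ∈ S₂, (if ω e then (2 : ℝ≥0∞)⁻¹ else 1)) =
        2⁻¹ ^ (S₂.filter (fun e => ω e = true)).card := by
      rw [← Finset.prod_filter_mul_prod_filter_not S₂ (fun e => ω e = true)]
      rw [Finset.prod_congr rfl (fun e he => by
          simp only [Finset.mem_filter] at he; simp [he.2] :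
          ∀ e ∈ S₂.filter (fun e => ω e = true), (if ω e then (2 : ℝ≥0∞)⁻¹ else 1) = 2⁻¹),
        Finset.prod_congr rfl (fun e he => by
          simp only [Finset.mem_filter] at he; simp [he.2] :
          ∀ e ∈ S₂.filter (fun e => ¬ω e = true), (if ω e then (2 : ℝ≥0∞)⁻¹ else 1) = 1),
        Finset.prod_const, Finset.prod_const, one_pow, mul_one]
    rw [hsplit2, ← ENNReal.inv_pow]
    set Y := (S₂.filter (fun e => ω e = true)).card
    have h2Y : (2 : ℝ≥0∞) ^ Y ≠ 0 := by positivity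
    have h2Y' : (2 : ℝ≥0∞) ^ Y ≠ ⊤ := ENNReal.pow_ne_top (by norm_num)
    calc (1 : ℝ≥0∞) = 2 ^ Y * (2 ^ Y)⁻¹ := (ENNReal.mul_inv_cancel h2Y h2Y').symm
      _ ≤ 2 ^ t * (2 ^ Y)⁻¹ := by
          gcongr
          exact one_le_two

lemma graphOf_adj {ω : Sym2 (Fin n) → Bool} {a b : Fin n} :
    (graphOf ω).Adj a b ↔ ω s(a, b) = true ∧ a ≠ b := by
  simp [graphOf, SimpleGraph.fromEdgeSet_adj]

lemma reduction (hp0 : 0 < p) (j₀ a₀ tt : ℕ)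
    (hj : j₀ = ⌈p * n / 100⌉₊) (ha : a₀ + 1 = ⌈100 / p⌉₊)
    (ht : tt = ⌊(a₀ : ℝ) * (p ^ 2 * n / 200)⌋₊)
    (ω : Sym2 (Fin n) → Bool)
    (hω : ¬ (∀ v : Fin n, ∀ J ⊆ (graphOf ω).neighborSet v,
              p * n / 100 ≤ (J.ncard : ℝ) →
              (({x : Fin n | x ∉ J ∧
                  (((graphOf ω).neighborSet x ∩ J).ncard : ℝ) ≤ p ^ 2 * n / 200}).ncard : ℝ)
                ≤ 100 / p)) :
    ∃ v : Fin n, ∃ J' A : Finset (Fin n), J'.card = j₀ ∧ A.card = a₀ ∧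
      v ∉ J' ∧ v ∉ A ∧ Disjoint A J' ∧ ω ∈ elemEvent n v J' A tt := by
  classical
  push_neg at hω
  obtain ⟨v, J, hJsub, hJcard, hB⟩ := hω
  set B : Set (Fin n) := {x : Fin n | x ∉ J ∧
      (((graphOf ω).neighborSet x ∩ J).ncard : ℝ) ≤ p ^ 2 * n / 200} with hBdef
  set JF : Finset (Fin n) := (Set.toFinite J).toFinset with hJF
  set BF : Finset (Fin n) := (Set.toFinite B).toFinset with hBF
  have hJFcard : JF.card = J.ncard := (Set.ncard_eq_toFinset_card J (Set.toFinite J)).symm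
  have hBFcard : BF.card = B.ncard := (Set.ncard_eq_toFinset_card B (Set.toFinite B)).symm
  have hj0le : j₀ ≤ JF.card := by
    rw [hJFcard, hj]
    exact Nat.ceil_le.2 hJcard
  obtain ⟨J', hJ'sub, hJ'card⟩ := Finset.exists_subset_card_eq hj0le
  have ha0le : a₀ ≤ (BF.erase v).card := by
    have h1 : a₀ + 1 ≤ BF.card := by
      rw [hBFcard, ha]
      exact Nat.ceil_le.2 hB.le
    have h2 := Finset.pred_card_le_card_erase (s := BF) (a := v)
    omega
  obtain ⟨A, hAsub, hAcard⟩ := Finset.exists_subset_card_eq ha0le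
  have hJ'J : ∀ x ∈ J', x ∈ J := by
    intro x hx
    have := hJ'sub hx
    rwa [hJF, Set.Finite.mem_toFinset] at this
  have hAB : ∀ x ∈ A, x ∈ B ∧ x ≠ v := by
    intro x hx
    have h1 := hAsub hx
    rw [Finset.mem_erase] at h1
    rw [hBF, Set.Finite.mem_toFinset] at h1
    exact ⟨h1.2, h1.1⟩
  have hvJ' : v ∉ J' := by
    intro h
    exact (graphOf ω).irrefl (hJsub (hJ'J v h))
  have hvA : v ∉ A := fun h => (hAB v h).2 rfl
  have hdisj : Disjoint A J' := by
    rw [Finset.disjoint_left]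
    intro x hxA hxJ'
    exact ((hAB x hxA).1).1 (hJ'J x hxJ')
  refine ⟨v, J', A, hJ'card, hAcard, hvJ', hvA, hdisj, ?_, ?_⟩
  · intro u hu
    have hadj : (graphOf ω).Adj v u := hJsub (hJ'J u hu)
    exact (graphOf_adj.1 hadj).1
  · -- the edge-count bound
    have hfilt : ∀ a, (∑ u ∈ J', (if ω s(a, u) then 1 else 0 : ℕ)) =
        (J'.filter (fun u => ω s(a, u) = true)).card := fun a =>
      (Finset.card_filter _ _).symm
    have inner : ∀ a ∈ A, (((J'.filter (fun u => ω s(a, u) = true)).card : ℝ)) ≤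
        p ^ 2 * n / 200 := by
      intro a haA
      have hsub : ↑(J'.filter (fun u => ω s(a, u) = true)) ⊆
          (graphOf ω).neighborSet a ∩ J := by
        intro u hu
        simp only [Finset.coe_filter, Set.mem_setOf_eq] at hu
        obtain ⟨huJ', hωu⟩ := hu
        have hau : a ≠ u := by
          intro h
          exact (Finset.disjoint_left.1 hdisj haA) (h ▸ huJ')
        exact ⟨graphOf_adj.2 ⟨hωu, hau⟩, hJ'J u huJ'⟩
      have hcard : (J'.filter (fun u => ω s(a, u) = true)).card ≤
          ((graphOf ω).neighborSet a ∩ J).ncard := by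
        rw [← Set.ncard_coe_finset]
        exact Set.ncard_le_ncard hsub (Set.toFinite _)
      exact le_trans (by exact_mod_cast hcard) (hAB a haA).1.2
    rw [ht]
    simp only [hfilt]
    refine Nat.le_floor ?_
    push_cast
    calc (∑ a ∈ A, (((J'.filter (fun u => ω s(a, u) = true)).card : ℝ)))
        ≤ ∑ a ∈ A, (p ^ 2 * n / 200) := Finset.sum_le_sum inner
      _ = A.card * (p ^ 2 * n / 200) := by rw [Finset.sum_const, nsmul_eq_mul]
      _ = (a₀ : ℝ) * (p ^ 2 * n / 200) := by rw [hAcard]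

lemma bad_bound (hp0 : 0 < p) (hp1 : p ≤ 1) (j₀ a₀ tt : ℕ)
    (hj : j₀ = ⌈p * n / 100⌉₊) (ha : a₀ + 1 = ⌈100 / p⌉₊)
    (ht : tt = ⌊(a₀ : ℝ) * (p ^ 2 * n / 200)⌋₊) :
    gnp n p ({ω : Sym2 (Fin n) → Bool | ∀ v : Fin n, ∀ J ⊆ (graphOf ω).neighborSet v,
              p * n / 100 ≤ (J.ncard : ℝ) →
              (({x : Fin n | x ∉ J ∧
                  (((graphOf ω).neighborSet x ∩ J).ncard : ℝ) ≤ p ^ 2 * n / 200}).ncard : ℝ)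
                ≤ 100 / p}ᶜ) ≤
      (n * n.choose j₀ * n.choose a₀ : ℕ) *
        (2 ^ tt * ENNReal.ofReal (p ^ j₀ * (1 - p / 2) ^ (a₀ * j₀))) := by
  classical
  set T : Finset (Fin n × Finset (Fin n) × Finset (Fin n)) :=
    ((Finset.univ : Finset (Fin n)) ×ˢ
      (Finset.univ.powersetCard j₀ ×ˢ Finset.univ.powersetCard a₀)).filter
      (fun x => x.1 ∉ x.2.1 ∧ x.1 ∉ x.2.2 ∧ Disjoint x.2.2 x.2.1) with hT
  have hsub : {ω : Sym2 (Fin n) → Bool | ∀ v : Fin n, ∀ J ⊆ (graphOf ω).neighborSet v,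
      p * n / 100 ≤ (J.ncard : ℝ) →
      (({x : Fin n | x ∉ J ∧
          (((graphOf ω).neighborSet x ∩ J).ncard : ℝ) ≤ p ^ 2 * n / 200}).ncard : ℝ)
        ≤ 100 / p}ᶜ ⊆ ⋃ x ∈ T, elemEvent n x.1 x.2.1 x.2.2 tt := by
    intro ω hω
    rw [Set.mem_compl_iff, Set.mem_setOf_eq] at hω
    obtain ⟨v, J', A, hJc, hAc, hvJ, hvA, hd, hmem⟩ :=
      reduction hp0 j₀ a₀ tt hj ha ht ω hω
    refine Set.mem_biUnion (show ((v, J', A) : Fin n × Finset (Fin n) × Finset (Fin n)) ∈ T from ?_) hmem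
    rw [hT, Finset.mem_filter]
    refine ⟨?_, hvJ, hvA, hd⟩
    rw [Finset.mem_product]
    refine ⟨Finset.mem_univ _, ?_⟩
    rw [Finset.mem_product]
    exact ⟨Finset.mem_powersetCard_univ.2 hJc, Finset.mem_powersetCard_univ.2 hAc⟩
  calc gnp n p _ ≤ gnp n p (⋃ x ∈ T, elemEvent n x.1 x.2.1 x.2.2 tt) := measure_mono hsub
    _ ≤ ∑ x ∈ T, gnp n p (elemEvent n x.1 x.2.1 x.2.2 tt) := measure_biUnion_finset_le T _
    _ ≤ ∑ _x ∈ T, (2 ^ tt * ENNReal.ofReal (p ^ j₀ * (1 - p / 2) ^ (a₀ * j₀))) := by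
        refine Finset.sum_le_sum fun x hx => ?_
        rw [hT, Finset.mem_filter, Finset.mem_product] at hx
        obtain ⟨⟨_, hx2⟩, hvJ, hvA, hd⟩ := hx
        rw [Finset.mem_product] at hx2
        have hJc := Finset.mem_powersetCard_univ.1 hx2.1
        have hAc := Finset.mem_powersetCard_univ.1 hx2.2
        have := elem_bound hp0.le hp1 x.1 x.2.1 x.2.2 tt hvJ hvA hd
        rwa [hJc, hAc] at this
    _ = T.card * (2 ^ tt * ENNReal.ofReal (p ^ j₀ * (1 - p / 2) ^ (a₀ * j₀))) := by
        rw [Finset.sum_const, nsmul_eq_mul]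
    _ ≤ (n * n.choose j₀ * n.choose a₀ : ℕ) *
          (2 ^ tt * ENNReal.ofReal (p ^ j₀ * (1 - p / 2) ^ (a₀ * j₀))) := by
        gcongr
        have : T.card ≤ ((Finset.univ : Finset (Fin n)) ×ˢ
            (Finset.univ.powersetCard j₀ ×ˢ Finset.univ.powersetCard a₀)).card :=
          Finset.card_filter_le _ _
        rw [Finset.card_product, Finset.card_product, Finset.card_univ, Fintype.card_fin,
          Finset.card_powersetCard, Finset.card_powersetCard, Finset.card_univ,
          Fintype.card_fin] at this
        exact_mod_cast le_of_le_of_eq this (mul_assoc _ _ _).symm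

set_option maxHeartbeats 2000000 in
lemma real_bound (n : ℕ) (p : ℝ) (h0 : 0 < p) (h1 : p ≤ 1)
    (h3 : 100 ≤ p * n) (h4 : 100000 * Real.log n ≤ n * p ^ 2)
    (h5 : 1 ≤ Real.log n) (j₀ a₀ tt : ℕ)
    (hj : j₀ = ⌈p * n / 100⌉₊) (ha : a₀ + 1 = ⌈100 / p⌉₊)
    (ht : tt = ⌊(a₀ : ℝ) * (p ^ 2 * n / 200)⌋₊) :
    (n : ℝ) * n.choose j₀ * n.choose a₀ *
      (2 ^ tt * (p ^ j₀ * (1 - p / 2) ^ (a₀ * j₀))) ≤ (n : ℝ)⁻¹ := by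
  have hn100 : (100 : ℝ) ≤ n := by
    have h := mul_le_mul_of_nonneg_right h1 (Nat.cast_nonneg (α := ℝ) n)
    rw [one_mul] at h
    linarith
  have hn0 : (0 : ℝ) < n := by linarith
  set L := Real.log n with hL
  have hL0 : 0 ≤ L := by linarith
  -- numeric facts about j₀, a₀, tt
  have hjlow : p * n / 100 ≤ (j₀ : ℝ) := hj ▸ Nat.le_ceil _
  have hjhigh : (j₀ : ℝ) ≤ p * n / 50 := by
    have h := Nat.ceil_lt_add_one (show (0:ℝ) ≤ p * n / 100 by positivity)
    rw [hj]; push_cast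
    have : p * n / 100 + 1 ≤ p * n / 50 := by nlinarith
    linarith [h.le]
  have halow : 100 - p ≤ (a₀ : ℝ) * p := by
    have h := Nat.le_ceil (100 / p)
    rw [← ha] at h
    push_cast at h
    have := (div_le_iff₀ h0).1 h
    nlinarith
  have hahigh : (a₀ : ℝ) * p ≤ 100 := by
    have h := Nat.ceil_lt_add_one (show (0:ℝ) ≤ 100 / p by positivity)
    rw [← ha] at h
    push_cast at h
    have h2 : (a₀ : ℝ) < 100 / p := by linarith
    have := (lt_div_iff₀ h0).1 h2
    linarith
  have hahigh' : (a₀ : ℝ) ≤ 100 / p := by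
    rw [le_div_iff₀ h0]; exact hahigh
  have httle : (tt : ℝ) ≤ (a₀ : ℝ) * (p ^ 2 * n / 200) := by
    rw [ht]; exact Nat.floor_le (by positivity)
  -- exponential bounds for each factor
  have B1 : (n : ℝ) = Real.exp L := (Real.exp_log hn0).symm
  have B2 : (n.choose a₀ : ℝ) ≤ Real.exp ((a₀ : ℝ) * L) := by
    calc (n.choose a₀ : ℝ) ≤ (n : ℝ) ^ a₀ := by exact_mod_cast Nat.choose_le_pow n a₀
      _ = Real.exp L ^ a₀ := by rw [B1]
      _ = Real.exp ((a₀ : ℝ) * L) := by rw [← Real.exp_nat_mul]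
  have B3 : (n.choose j₀ : ℝ) * p ^ j₀ ≤ Real.exp (6 * (j₀ : ℝ)) := by
    have hfac : ((j₀ : ℝ)) ^ j₀ / (j₀.factorial : ℝ) ≤ Real.exp j₀ := by
      refine le_trans ?_ (Real.sum_le_exp_of_nonneg (by positivity) (j₀ + 1))
      refine Finset.single_le_sum (f := fun i => (j₀ : ℝ) ^ i / (i.factorial : ℝ))
        (fun i _ => by positivity) ?_
      simp
    have hfac0 : (0 : ℝ) < (j₀.factorial : ℝ) := by exact_mod_cast j₀.factorial_pos
    have hchoose : (n.choose j₀ : ℝ) ≤ (n : ℝ) ^ j₀ / (j₀.factorial : ℝ) :=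
      Nat.choose_le_pow_div j₀ n
    have hstep : (n.choose j₀ : ℝ) * p ^ j₀ ≤ (p * n) ^ j₀ / (j₀.factorial : ℝ) := by
      rw [mul_pow]
      calc (n.choose j₀ : ℝ) * p ^ j₀ ≤ ((n : ℝ) ^ j₀ / (j₀.factorial : ℝ)) * p ^ j₀ := by
            apply mul_le_mul_of_nonneg_right hchoose (by positivity)
        _ = p ^ j₀ * (n:ℝ) ^ j₀ / (j₀.factorial : ℝ) := by ring
    refine hstep.trans ?_
    have hj0pos : 0 < (j₀ : ℝ) := by
      have : (1 : ℝ) ≤ (j₀ : ℝ) := by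
        have : p * n / 100 ≥ 1 := by linarith
        linarith [hjlow]
      linarith
    have hpn : p * n ≤ 100 * (j₀ : ℝ) := by
      have := hjlow; linarith
    calc (p * n) ^ j₀ / (j₀.factorial : ℝ)
        ≤ (100 * (j₀:ℝ)) ^ j₀ / (j₀.factorial : ℝ) := by
          gcongr
      _ = 100 ^ j₀ * ((j₀:ℝ) ^ j₀ / (j₀.factorial : ℝ)) := by rw [mul_pow]; ring
      _ ≤ 100 ^ j₀ * Real.exp j₀ := by
          apply mul_le_mul_of_nonneg_left hfac (by positivity)
      _ ≤ Real.exp (5 * (j₀:ℝ)) * Real.exp j₀ := by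
          apply mul_le_mul_of_nonneg_right ?_ (Real.exp_pos _).le
          have h100 : (100 : ℝ) ≤ Real.exp 5 := by
            have h27 : (2.7 : ℝ) ≤ Real.exp 1 := by
              have := Real.exp_one_gt_d9
              linarith
            calc (100 : ℝ) ≤ 2.7 ^ (5:ℕ) := by norm_num
              _ ≤ Real.exp 1 ^ (5:ℕ) := by
                  apply pow_le_pow_left₀ (by norm_num) h27
              _ = Real.exp 5 := by
                  rw [← Real.exp_nat_mul]; norm_num
          calc (100 : ℝ) ^ j₀ ≤ (Real.exp 5) ^ j₀ := by
                apply pow_le_pow_left₀ (by norm_num) h100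
            _ = Real.exp (5 * (j₀:ℝ)) := by
                rw [← Real.exp_nat_mul]; ring_nf
      _ = Real.exp (6 * (j₀ : ℝ)) := by
          rw [← Real.exp_add]; ring_nf
  have B4 : (2 : ℝ) ^ tt = Real.exp (Real.log 2 * tt) := by
    rw [mul_comm, Real.exp_nat_mul, Real.exp_log (by norm_num)]
  have B5 : (1 - p / 2) ^ (a₀ * j₀) ≤ Real.exp (-(p / 2) * ((a₀ : ℝ) * (j₀ : ℝ))) := by
    have hle : (1 - p / 2) ≤ Real.exp (-(p / 2)) := by
      have := Real.add_one_le_exp (-(p / 2))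
      linarith
    calc (1 - p / 2) ^ (a₀ * j₀) ≤ Real.exp (-(p / 2)) ^ (a₀ * j₀) := by
          apply pow_le_pow_left₀ (by linarith) hle
      _ = Real.exp (-(p / 2) * ((a₀ : ℝ) * (j₀ : ℝ))) := by
          rw [← Real.exp_nat_mul]; push_cast; ring_nf
  -- combine everything
  have hhalf : (0:ℝ) ≤ 1 - p/2 := by linarith
  set E := L + (a₀:ℝ) * L + Real.log 2 * tt + (6 * (j₀:ℝ) + -(p/2) * ((a₀:ℝ)*(j₀:ℝ))) with hE
  have main : (n : ℝ) * n.choose j₀ * n.choose a₀ *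
      (2 ^ tt * (p ^ j₀ * (1 - p / 2) ^ (a₀ * j₀))) ≤ Real.exp E := by
    have step : (n : ℝ) * n.choose j₀ * n.choose a₀ *
        (2 ^ tt * (p ^ j₀ * (1 - p / 2) ^ (a₀ * j₀))) =
        (((n:ℝ) * (n.choose a₀ : ℝ)) * (2:ℝ)^tt) *
          (((n.choose j₀ : ℝ) * p ^ j₀) * (1 - p/2)^(a₀*j₀)) := by ring
    rw [step, hE, Real.exp_add, Real.exp_add, Real.exp_add]
    have part1 : ((n:ℝ) * (n.choose a₀ : ℝ)) * (2:ℝ)^tt ≤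
        Real.exp L * Real.exp ((a₀:ℝ) * L) * Real.exp (Real.log 2 * tt) := by
      rw [B4]
      refine mul_le_mul_of_nonneg_right ?_ (Real.exp_pos _).le
      refine mul_le_mul B1.le B2 (by positivity) (Real.exp_pos _).le
    have part2 : ((n.choose j₀ : ℝ) * p ^ j₀) * (1 - p/2)^(a₀*j₀) ≤
        Real.exp (6 * (j₀:ℝ) + -(p/2) * ((a₀:ℝ)*(j₀:ℝ))) := by
      rw [Real.exp_add]
      exact mul_le_mul B3 B5 (by positivity) (Real.exp_pos _).le
    refine mul_le_mul part1 part2 ?_ ?_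
    · positivity
    · positivity
  have hA : (a₀:ℝ) * L ≤ p * n / 1000 := by
    have h1 : (a₀:ℝ) * L ≤ (100/p) * L := mul_le_mul_of_nonneg_right hahigh' hL0
    have h2 : (100/p) * L ≤ (100/p) * (n * p^2 / 100000) :=
      mul_le_mul_of_nonneg_left (by linarith) (by positivity)
    have h3 : (100/p) * (n * p^2 / 100000) = p * n / 1000 := by field_simp; ring
    linarith
  have hB : 6 * (j₀:ℝ) ≤ 3 * (p*n) / 25 := by linarith
  have hC : Real.log 2 * tt ≤ 7 * (p*n) / 20 := by
    have htt2 : (tt:ℝ) ≤ p * n / 2 := by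
      have h1 : (a₀:ℝ) * (p^2*n/200) ≤ (100/p) * (p^2*n/200) :=
        mul_le_mul_of_nonneg_right hahigh' (by positivity)
      have heq : (100/p) * (p^2*n/200) = p*n/2 := by field_simp; ring
      linarith
    have hlog2 : Real.log 2 ≤ 0.7 := by
      have := Real.log_two_lt_d9
      linarith
    have htt0 : (0:ℝ) ≤ (tt:ℝ) := Nat.cast_nonneg _
    calc Real.log 2 * tt ≤ 0.7 * (tt:ℝ) := mul_le_mul_of_nonneg_right hlog2 htt0
      _ ≤ 0.7 * (p*n/2) := mul_le_mul_of_nonneg_left htt2 (by norm_num)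
      _ = 7 * (p*n)/20 := by ring
  have hD : 99 * (p*n) / 200 ≤ (p/2) * ((a₀:ℝ)*(j₀:ℝ)) := by
    have ha2 : (100-p)/p ≤ (a₀:ℝ) := (div_le_iff₀ h0).2 halow
    have hj2 : p * n / 100 ≤ (j₀:ℝ) := hjlow
    have h99 : (0:ℝ) ≤ (100-p)/p := div_nonneg (by linarith) h0.le
    have hprod : ((100-p)/p) * (p * n / 100) ≤ (a₀:ℝ) * (j₀:ℝ) :=
      mul_le_mul ha2 hj2 (by positivity) (Nat.cast_nonneg _)
    have heq : (p/2) * (((100-p)/p) * (p * n / 100)) = (100-p) * (p*n) / 200 := by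
      field_simp; ring
    have hkey : (0:ℝ) ≤ (1 - p) * (p * (n:ℝ)) :=
      mul_nonneg (by linarith) (by linarith)
    have hexp : (100-p) * (p*(n:ℝ)) / 200 - 99 * (p*(n:ℝ)) / 200 = (1-p) * (p*(n:ℝ)) / 200 := by
      ring
    have h5' : 99 * (p*n) / 200 ≤ (100-p) * (p*n) / 200 := by linarith
    have := mul_le_mul_of_nonneg_left hprod (show (0:ℝ) ≤ p/2 by positivity)
    linarith
  have hpn' : 100000 * L ≤ p * n := by
    have hp2 : p ^ 2 ≤ p := by nlinarith [sq_nonneg p]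
    have h := mul_le_mul_of_nonneg_left hp2 (le_of_lt hn0)
    have : (n:ℝ) * p ^ 2 ≤ (n:ℝ) * p := h
    linarith [h4, this]
  have hEneg : E ≤ -L := by
    rw [hE]
    linarith
  calc (n : ℝ) * n.choose j₀ * n.choose a₀ *
      (2 ^ tt * (p ^ j₀ * (1 - p / 2) ^ (a₀ * j₀)))
      ≤ Real.exp E := main
    _ ≤ Real.exp (-L) := Real.exp_le_exp.2 hEneg
    _ = (n:ℝ)⁻¹ := by rw [Real.exp_neg, ← B1]

lemma cast_helper (N t : ℕ) (x : ℝ) (hx : 0 ≤ x) :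
    (N : ℝ≥0∞) * (2 ^ t * ENNReal.ofReal x) = ENNReal.ofReal ((N : ℝ) * ((2:ℝ) ^ t * x)) := by
  have h2 : (2 : ℝ≥0∞) ^ t = ENNReal.ofReal ((2:ℝ) ^ t) := by
    rw [ENNReal.ofReal_pow (by norm_num)]
    norm_num
  rw [h2, ← ENNReal.ofReal_mul (by positivity), ← ENNReal.ofReal_natCast N,
    ← ENNReal.ofReal_mul (by positivity)]

/-- If `p ≫ ((log n)/n)^{1/2}`, then a.a.s.: for every vertex
`v` and every `J ⊆ N(v)` with `|J| ≥ pn/100`, all but at most `100/p` vertices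
`x ∉ J` satisfy `|N(x) ∩ J| > p²n/200`. -/
theorem stmt_5 (p : ℕ → ℝ) (hp : ∀ n, 0 ≤ p n ∧ p n ≤ 1)
    (hgrow : Tendsto (fun n : ℕ => p n / Real.sqrt (Real.log n / n)) atTop atTop) :
    Tendsto (fun n : ℕ => gnp n (p n)
      {ω | ∀ v : Fin n, ∀ J ⊆ (graphOf ω).neighborSet v,
              p n * n / 100 ≤ (J.ncard : ℝ) →
              (({x : Fin n | x ∉ J ∧
                  (((graphOf ω).neighborSet x ∩ J).ncard : ℝ) ≤ p n ^ 2 * n / 200}).ncard : ℝ)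
                ≤ 100 / p n})
      atTop (𝓝 1) := by
  have hupper : ∀ n : ℕ, gnp n (p n)
      {ω | ∀ v : Fin n, ∀ J ⊆ (graphOf ω).neighborSet v,
              p n * n / 100 ≤ (J.ncard : ℝ) →
              (({x : Fin n | x ∉ J ∧
                  (((graphOf ω).neighborSet x ∩ J).ncard : ℝ) ≤ p n ^ 2 * n / 200}).ncard : ℝ)
                ≤ 100 / p n} ≤ 1 := fun n => prob_le_one
  have hlower : ∀ᶠ n : ℕ in atTop, 1 - ENNReal.ofReal ((n : ℝ)⁻¹) ≤ gnp n (p n)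
      {ω | ∀ v : Fin n, ∀ J ⊆ (graphOf ω).neighborSet v,
              p n * n / 100 ≤ (J.ncard : ℝ) →
              (({x : Fin n | x ∉ J ∧
                  (((graphOf ω).neighborSet x ∩ J).ncard : ℝ) ≤ p n ^ 2 * n / 200}).ncard : ℝ)
                ≤ 100 / p n} := by
    filter_upwards [hgrow.eventually_ge_atTop 400, eventually_ge_atTop 3] with n hr hn3
    have hp1 := (hp n).2
    have hn3' : (3 : ℝ) ≤ n := by exact_mod_cast hn3
    have hn0 : (0 : ℝ) < n := by linarith
    have hlog1 : 1 ≤ Real.log n := by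
      rw [Real.le_log_iff_exp_le hn0]
      have := Real.exp_one_lt_d9
      linarith
    have hs0 : 0 < Real.sqrt (Real.log n / n) :=
      Real.sqrt_pos.2 (div_pos (by linarith) hn0)
    have hp400 : 400 * Real.sqrt (Real.log n / n) ≤ p n := by
      rw [le_div_iff₀ hs0] at hr
      linarith
    have h0 : 0 < p n := lt_of_lt_of_le (by positivity) hp400
    have h4 : 100000 * Real.log n ≤ n * p n ^ 2 := by
      have hsq : Real.sqrt (Real.log n / n) ^ 2 = Real.log n / n :=
        Real.sq_sqrt (by positivity)
      have hpow : (400 * Real.sqrt (Real.log n / n)) ^ 2 ≤ p n ^ 2 :=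
        pow_le_pow_left₀ (by positivity) hp400 2
      rw [mul_pow, hsq] at hpow
      have hmul := mul_le_mul_of_nonneg_left hpow (le_of_lt hn0)
      have hne : (n : ℝ) ≠ 0 := ne_of_gt hn0
      have heq : (n : ℝ) * (400 ^ 2 * (Real.log n / n)) = 160000 * Real.log n := by
        field_simp
        norm_num
      rw [heq] at hmul
      linarith
    have h3' : 100 ≤ p n * n := by
      have hp2 : p n ^ 2 ≤ p n := by nlinarith
      have hmul := mul_le_mul_of_nonneg_left hp2 hn0.le
      have hcomm : p n * n = (n : ℝ) * p n := mul_comm _ _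
      linarith
    set j₀ := ⌈p n * n / 100⌉₊ with hj
    set a₀ := ⌈100 / p n⌉₊ - 1 with ha'
    have ha : a₀ + 1 = ⌈100 / p n⌉₊ :=
      Nat.sub_add_cancel (Nat.one_le_ceil_iff.2 (by positivity))
    set tt := ⌊(a₀ : ℝ) * (p n ^ 2 * n / 200)⌋₊ with ht
    have hbad := bad_bound (n := n) (p := p n) h0 hp1 j₀ a₀ tt hj ha ht
    have hreal := real_bound n (p n) h0 hp1 h3' h4 hlog1 j₀ a₀ tt hj ha ht
    have hhalf : (0 : ℝ) ≤ 1 - p n / 2 := by linarith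
    have hcompl : gnp n (p n)
        ({ω : Sym2 (Fin n) → Bool | ∀ v : Fin n, ∀ J ⊆ (graphOf ω).neighborSet v,
              p n * n / 100 ≤ (J.ncard : ℝ) →
              (({x : Fin n | x ∉ J ∧
                  (((graphOf ω).neighborSet x ∩ J).ncard : ℝ) ≤ p n ^ 2 * n / 200}).ncard : ℝ)
                ≤ 100 / p n}ᶜ) ≤ ENNReal.ofReal ((n : ℝ)⁻¹) := by
      refine hbad.trans ?_
      rw [cast_helper _ _ _ (by positivity)]
      refine ENNReal.ofReal_le_ofReal ?_
      refine le_trans (le_of_eq ?_) hreal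
      push_cast
      ring
    rw [tsub_le_iff_right]
    calc (1 : ℝ≥0∞) = gnp n (p n) Set.univ := measure_univ.symm
      _ = gnp n (p n)
          ({ω : Sym2 (Fin n) → Bool | ∀ v : Fin n, ∀ J ⊆ (graphOf ω).neighborSet v,
              p n * n / 100 ≤ (J.ncard : ℝ) →
              (({x : Fin n | x ∉ J ∧
                  (((graphOf ω).neighborSet x ∩ J).ncard : ℝ) ≤ p n ^ 2 * n / 200}).ncard : ℝ)
                ≤ 100 / p n} ∪
           {ω : Sym2 (Fin n) → Bool | ∀ v : Fin n, ∀ J ⊆ (graphOf ω).neighborSet v,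
              p n * n / 100 ≤ (J.ncard : ℝ) →
              (({x : Fin n | x ∉ J ∧
                  (((graphOf ω).neighborSet x ∩ J).ncard : ℝ) ≤ p n ^ 2 * n / 200}).ncard : ℝ)
                ≤ 100 / p n}ᶜ) := by rw [Set.union_compl_self]
      _ ≤ gnp n (p n)
          {ω : Sym2 (Fin n) → Bool | ∀ v : Fin n, ∀ J ⊆ (graphOf ω).neighborSet v,
              p n * n / 100 ≤ (J.ncard : ℝ) →
              (({x : Fin n | x ∉ J ∧
                  (((graphOf ω).neighborSet x ∩ J).ncard : ℝ) ≤ p n ^ 2 * n / 200}).ncard : ℝ)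
                ≤ 100 / p n} +
          gnp n (p n)
          ({ω : Sym2 (Fin n) → Bool | ∀ v : Fin n, ∀ J ⊆ (graphOf ω).neighborSet v,
              p n * n / 100 ≤ (J.ncard : ℝ) →
              (({x : Fin n | x ∉ J ∧
                  (((graphOf ω).neighborSet x ∩ J).ncard : ℝ) ≤ p n ^ 2 * n / 200}).ncard : ℝ)
                ≤ 100 / p n}ᶜ) := measure_union_le _ _
      _ ≤ _ + ENNReal.ofReal ((n : ℝ)⁻¹) := add_le_add_right hcompl _
  have h0' : Tendsto (fun n : ℕ => ENNReal.ofReal ((n : ℝ)⁻¹)) atTop (𝓝 0) := by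
    rw [← ENNReal.ofReal_zero]
    exact (ENNReal.continuous_ofReal.tendsto 0).comp tendsto_inv_atTop_nhds_zero_nat
  have hlow : Tendsto (fun n : ℕ => 1 - ENNReal.ofReal ((n : ℝ)⁻¹)) atTop (𝓝 1) := by
    have := ENNReal.Tendsto.sub (tendsto_const_nhds (x := (1 : ℝ≥0∞))
      (f := atTop)) h0' (Or.inl ENNReal.one_ne_top)
    simpa using this
  exact tendsto_of_tendsto_of_tendsto_of_le_of_le' hlow tendsto_const_nhds hlower
    (Eventually.of_forall hupper)


end MonochromaticTrees
end

section
/- If p = p(n) ≫ ((log n)/n)^{1/2}, then asymptotically almost surely G ∈ G(n,p) satisfies: every set A ⊆ V(G) with |A| ≤ 100/p has 2 e_G(A) ≤ p²n|A|/4, where e_G(A) denotes the number of edges of G with both endpoints in A. -/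
open MeasureTheory Filter Topology SimpleGraph

namespace MonochromaticTrees

variable {V : Type*} {C : Type*}

instance gnp_prob (n : ℕ) (p : ℝ) : IsProbabilityMeasure (gnp n p) := by
  unfold gnp; infer_instance

lemma gnp_cyl (n : ℕ) (p : ℝ) (hp1 : p ≤ 1) (S : Finset (Sym2 (Fin n))) :
    gnp n p {ω | ∀ e ∈ S, ω e = true} = (ENNReal.ofReal p) ^ S.card := by
  have hq : min (Real.toNNReal p) 1 = Real.toNNReal p :=
    min_eq_left (Real.toNNReal_le_one.2 hp1)
  have hset : {ω : Sym2 (Fin n) → Bool | ∀ e ∈ S, ω e = true}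
      = Set.pi Set.univ (fun e => if e ∈ S then ({true} : Set Bool) else Set.univ) := by
    ext ω
    simp only [Set.mem_setOf_eq, Set.mem_pi, Set.mem_univ, forall_true_left]
    constructor
    · intro h e; split_ifs with he
      · simpa using h e he
      · trivial
    · intro h e he; have := h e; rw [if_pos he] at this; simpa using this
  rw [gnp, hset, Measure.pi_pi]
  have : ∀ e : Sym2 (Fin n),
      (PMF.bernoulli (min (Real.toNNReal p) 1) (min_le_right _ _)).toMeasure
        (if e ∈ S then ({true} : Set Bool) else Set.univ)
      = if e ∈ S then ENNReal.ofReal p else 1 := by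
    intro e; split_ifs with he
    · rw [PMF.toMeasure_apply_singleton _ _ (measurableSet_singleton _)]
      rw [PMF.bernoulli_apply, hq]; rfl
    · exact measure_univ
  simp only [this]
  rw [Finset.prod_ite_mem Finset.univ S (fun _ => ENNReal.ofReal p)]
  simp [Finset.prod_const]

set_option maxHeartbeats 2000000 in
lemma term_bound (n a N : ℕ) (p : ℝ) (hp0 : 0 < p) (ha : 1 ≤ a)
    (hN : (N:ℝ) ≤ (a:ℝ)^2) (hap : (a:ℝ) * p ≤ 100)
    (hlog : 200 ≤ Real.log n) (hpn : 144 * Real.log n ≤ p^2 * n) :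
    (N.choose (Nat.floor (p^2 * n * a / 8) + 1) : ℝ) * p ^ (Nat.floor (p^2 * n * a / 8) + 1)
      ≤ (((n:ℝ)^36)⁻¹) ^ a := by
  have hn1 : (1:ℝ) ≤ (n:ℝ) := by
    by_contra h
    have := Real.log_nonpos (by positivity) (le_of_not_ge h)
    linarith
  have hn0 : (0:ℝ) < n := by linarith
  have hlogpos : (0:ℝ) < Real.log n := by linarith
  have ha1 : (1:ℝ) ≤ (a:ℝ) := by exact_mod_cast ha
  set x : ℝ := p^2 * n * a / 8 with hx
  have hxnn : 0 ≤ x := by positivity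
  set t : ℕ := Nat.floor x + 1 with ht
  have htx : x < (t:ℝ) := by
    push_cast [ht]
    exact Nat.lt_floor_add_one x
  have htlb : 18 * (a:ℝ) * Real.log n ≤ (t:ℝ) := by
    have h1 : 144 * Real.log n * a / 8 ≤ x := by
      rw [hx]
      have : 144 * Real.log n * (a:ℝ) ≤ p^2 * n * a := by nlinarith
      linarith
    nlinarith
  have htpos : (0:ℝ) < (t:ℝ) := lt_of_lt_of_le (by positivity) htlb
  have htfac : (0:ℝ) < (t.factorial : ℝ) := by exact_mod_cast t.factorial_pos
  have hfact : (t:ℝ)^t ≤ Real.exp t * t.factorial := by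
    have h := Real.sum_le_exp_of_nonneg (t.cast_nonneg (α := ℝ)) (t+1)
    have h2 : (t:ℝ)^t / t.factorial ≤ ∑ i ∈ Finset.range (t+1), (t:ℝ)^i / i.factorial := by
      refine Finset.single_le_sum (f := fun i => (t:ℝ)^i / i.factorial) (fun i _ => by positivity) ?_
      simp
    have := h2.trans h
    rw [div_le_iff₀ htfac] at this
    linarith
  have hchoose : (N.choose t : ℝ) ≤ (N:ℝ)^t / t.factorial := Nat.choose_le_pow_div t N
  have hNnn : (0:ℝ) ≤ (N:ℝ) := N.cast_nonneg
  have key : (N:ℝ) * p * Real.exp 1 / t ≤ Real.exp (-2) := by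
    have he : Real.exp 1 < 2.7182818286 := Real.exp_one_lt_d9
    have he0 : (0:ℝ) < Real.exp 1 := Real.exp_pos 1
    have hexp2 : Real.exp (-2) = (Real.exp 1 ^ 2)⁻¹ := by
      rw [Real.exp_neg]
      congr 1
      rw [show (2:ℝ) = ((2:ℕ):ℝ) * 1 by norm_num, Real.exp_nat_mul]
    have hexp2lb : (0.135 : ℝ) ≤ Real.exp (-2) := by
      rw [hexp2]
      rw [le_inv_comm₀ (by norm_num) (by positivity)]
      nlinarith
    have hNp : (N:ℝ) * p ≤ 100 * a := by nlinarith
    have ht3600 : 3600 * (a:ℝ) ≤ t := by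
      have := mul_le_mul_of_nonneg_left hlog (by positivity : (0:ℝ) ≤ 18 * (a:ℝ))
      nlinarith
    rw [div_le_iff₀ htpos]
    have h1 : (N:ℝ) * p * Real.exp 1 ≤ 100 * (a:ℝ) * 2.7182818286 :=
      mul_le_mul hNp he.le he0.le (by positivity)
    have h2 : (0.135:ℝ) * (3600 * (a:ℝ)) ≤ Real.exp (-2) * t :=
      mul_le_mul hexp2lb ht3600 (by positivity) (Real.exp_pos _).le
    nlinarith
  calc (N.choose t : ℝ) * p ^ t
      ≤ ((N:ℝ)^t / t.factorial) * p ^ t := by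
        apply mul_le_mul_of_nonneg_right hchoose (by positivity)
    _ = ((N:ℝ) * p)^t / t.factorial := by rw [mul_pow]; ring
    _ ≤ ((N:ℝ) * p)^t * (Real.exp t / (t:ℝ)^t) := by
        rw [div_eq_mul_inv]
        apply mul_le_mul_of_nonneg_left _ (by positivity)
        rw [inv_le_iff_one_le_mul₀ htfac, div_mul_eq_mul_div, le_div_iff₀ (by positivity)]
        linarith
    _ = ((N:ℝ) * p * Real.exp 1 / t)^t := by
        rw [div_pow, mul_pow, mul_pow, ← Real.exp_nat_mul]
        ring_nf
    _ ≤ (Real.exp (-2))^t := by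
        apply pow_le_pow_left₀ (by positivity) key
    _ = Real.exp ((t:ℝ) * (-2)) := by rw [Real.exp_nat_mul]
    _ ≤ Real.exp (-(36 * (a:ℝ) * Real.log n)) := by
        apply Real.exp_le_exp.2
        nlinarith
    _ = (((n:ℝ)^36)⁻¹) ^ a := by
        rw [inv_pow, ← pow_mul, Real.exp_neg]
        congr 1
        rw [← Real.exp_log hn0, ← Real.exp_nat_mul, Real.exp_log hn0]
        congr 1
        push_cast
        ring

open Finset in
lemma sum_g (n : ℕ) (hn : 2 ≤ n) :
    ∑ F ∈ (Finset.univ : Finset (Fin n)).powerset,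
      (if F.card = 0 then (0:ℝ) else (((n:ℝ)^36)⁻¹) ^ F.card) ≤ (n:ℝ)⁻¹ := by
  have hn1 : (2:ℝ) ≤ (n:ℝ) := by exact_mod_cast hn
  have hn0 : (0:ℝ) < n := by linarith
  set g : ℕ → ℝ := fun k => if k = 0 then (0:ℝ) else (((n:ℝ)^36)⁻¹) ^ k with hg
  have hsum : ∑ F ∈ (Finset.univ : Finset (Fin n)).powerset, g F.card
      = ∑ j ∈ range (Finset.univ (α := Fin n)).card.succ, (((Finset.univ (α := Fin n)).card.choose j) • g j) := by
    rw [Finset.sum_powerset]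
    exact Finset.sum_congr rfl fun j _ => Finset.sum_powersetCard j _ g
  rw [hsum]
  have hterm : ∀ j ∈ range (Finset.univ (α := Fin n)).card.succ,
      ((Finset.univ (α := Fin n)).card.choose j) • g j ≤ ((n:ℝ)^35)⁻¹ := by
    intro j _
    rcases Nat.eq_zero_or_pos j with hj | hj
    · subst hj; simp [hg]
    · have hjne : j ≠ 0 := hj.ne'
      rw [hg]
      simp only [hjne, if_false, nsmul_eq_mul]
      have hcard : (Finset.univ (α := Fin n)).card = n := by simp
      rw [hcard]
      have h1 : ((n.choose j : ℕ) : ℝ) ≤ (n:ℝ) ^ j := by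
        exact_mod_cast Nat.choose_le_pow n j
      calc ((n.choose j : ℕ) : ℝ) * (((n:ℝ)^36)⁻¹) ^ j
          ≤ (n:ℝ)^j * (((n:ℝ)^36)⁻¹) ^ j := by
            apply mul_le_mul_of_nonneg_right h1 (by positivity)
        _ = (((n:ℝ)^35)⁻¹) ^ j := by
            rw [← mul_pow]
            congr 1
            field_simp
        _ ≤ ((n:ℝ)^35)⁻¹ := by
            apply pow_le_of_le_one (by positivity) ?_ hjne
            rw [inv_le_one_iff₀]
            right
            exact one_le_pow₀ (by linarith)
  calc ∑ j ∈ range (Finset.univ (α := Fin n)).card.succ, ((Finset.univ (α := Fin n)).card.choose j) • g j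
      ≤ (range (Finset.univ (α := Fin n)).card.succ).card • ((n:ℝ)^35)⁻¹ :=
        Finset.sum_le_card_nsmul _ _ _ hterm
    _ = ((n:ℝ) + 1) * ((n:ℝ)^35)⁻¹ := by
        rw [Finset.card_range, nsmul_eq_mul]
        simp only [Finset.card_univ, Fintype.card_fin]
        push_cast
        ring
    _ ≤ (n:ℝ)⁻¹ := by
        rw [mul_inv_le_iff₀ (by positivity), inv_mul_eq_div, le_div_iff₀ hn0]
        have h3 : (n:ℝ)^3 ≤ (n:ℝ)^35 := pow_le_pow_right₀ (by linarith) (by norm_num)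
        have h4 : ((n:ℝ)+1) * n ≤ (n:ℝ)^3 := by nlinarith [mul_le_mul_of_nonneg_left hn1 hn0.le, mul_le_mul_of_nonneg_left (mul_le_mul_of_nonneg_left hn1 hn0.le) hn0.le]
        linarith

lemma bad_subset (n : ℕ) (p : ℝ) (hp0 : 0 < p) :
    {ω : Sym2 (Fin n) → Bool | ¬ ∀ A : Set (Fin n), (A.ncard : ℝ) ≤ 100 / p →
        2 * (edgesWithin (graphOf ω) A : ℝ) ≤ p ^ 2 * n * A.ncard / 4}
      ⊆ ⋃ F ∈ Finset.filter (fun F : Finset (Fin n) => (F.card : ℝ) ≤ 100 / p)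
            (Finset.univ : Finset (Fin n)).powerset,
          ⋃ S ∈ F.sym2.powersetCard (Nat.floor (p ^ 2 * n * F.card / 8) + 1),
            {ω | ∀ e ∈ S, ω e = true} := by
  intro ω hω
  simp only [Set.mem_setOf_eq, not_forall] at hω
  obtain ⟨A, hA1, hA2⟩ := hω
  push_neg at hA2
  have hAfin : A.Finite := A.toFinite
  set F : Finset (Fin n) := hAfin.toFinset with hF
  have hFcard : F.card = A.ncard := by
    rw [hF, Set.ncard_eq_toFinset_card A hAfin]
  set a : ℕ := A.ncard with hadef
  set t : ℕ := Nat.floor (p ^ 2 * n * a / 8) + 1 with htdef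
  -- the edge set within A
  set E : Set (Sym2 (Fin n)) := {e ∈ (graphOf ω).edgeSet | ∀ v ∈ e, v ∈ A} with hE
  have hEfin : E.Finite := E.toFinite
  have hecard : edgesWithin (graphOf ω) A = hEfin.toFinset.card := by
    rw [edgesWithin, Set.ncard_eq_toFinset_card _ hEfin]
  -- t ≤ e(A)
  have hte : t ≤ hEfin.toFinset.card := by
    rw [← hecard]
    have hx : p ^ 2 * n * a / 8 < (edgesWithin (graphOf ω) A : ℝ) := by linarith
    have := (Nat.floor_le (by positivity : (0:ℝ) ≤ p ^ 2 * n * a / 8)).trans_lt hx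
    rw [htdef]
    exact_mod_cast Nat.cast_lt.mp this
  obtain ⟨S, hSsub, hScard⟩ := Finset.exists_subset_card_eq hte
  have hFmem : F ∈ Finset.filter (fun F : Finset (Fin n) => (F.card : ℝ) ≤ 100 / p)
      (Finset.univ : Finset (Fin n)).powerset := by
    simp only [Finset.mem_filter, Finset.mem_powerset]
    exact ⟨Finset.subset_univ _, by rw [hFcard]; exact hA1⟩
  have hSmem : S ∈ F.sym2.powersetCard (Nat.floor (p ^ 2 * n * F.card / 8) + 1) := by
    rw [Finset.mem_powersetCard]
    rw [hFcard]
    refine ⟨hSsub.trans ?_, by rw [hScard]⟩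
    intro e he
    rw [Set.Finite.mem_toFinset] at he
    rw [Finset.mem_sym2_iff]
    intro v hv
    rw [hF, Set.Finite.mem_toFinset]
    exact he.2 v hv
  refine Set.mem_biUnion hFmem (Set.mem_biUnion hSmem ?_)
  · intro e he
    have := hSsub he
    rw [Set.Finite.mem_toFinset, hE] at this
    have hedge := this.1
    rw [graphOf, SimpleGraph.edgeSet_fromEdgeSet] at hedge
    exact hedge.1

open Finset in
lemma union_bound (n : ℕ) (p : ℝ) (hp0 : 0 < p) (hp1 : p ≤ 1)
    (hlog : 200 ≤ Real.log n) (hpn : 144 * Real.log n ≤ p ^ 2 * n) :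
    gnp n p (⋃ F ∈ Finset.filter (fun F : Finset (Fin n) => (F.card : ℝ) ≤ 100 / p)
            (Finset.univ : Finset (Fin n)).powerset,
          ⋃ S ∈ F.sym2.powersetCard (Nat.floor (p ^ 2 * n * F.card / 8) + 1),
            {ω | ∀ e ∈ S, ω e = true}) ≤ ENNReal.ofReal (n:ℝ)⁻¹ := by
  have hn2 : 2 ≤ n := by
    by_contra h
    push_neg at h
    interval_cases n <;> simp_all <;> nlinarith [Real.log_nonpos (by norm_num : (0:ℝ) ≤ 1) (by norm_num : (1:ℝ) ≤ 1)]
  set 𝒜 := Finset.filter (fun F : Finset (Fin n) => (F.card : ℝ) ≤ 100 / p)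
      (Finset.univ : Finset (Fin n)).powerset with h𝒜
  set tf : ℕ → ℕ := fun a => Nat.floor (p ^ 2 * n * a / 8) + 1 with htf
  set g : ℕ → ℝ := fun k => if k = 0 then (0:ℝ) else (((n:ℝ)^36)⁻¹) ^ k with hg
  calc gnp n p (⋃ F ∈ 𝒜, ⋃ S ∈ F.sym2.powersetCard (tf F.card), {ω | ∀ e ∈ S, ω e = true})
      ≤ ∑ F ∈ 𝒜, gnp n p (⋃ S ∈ F.sym2.powersetCard (tf F.card), {ω | ∀ e ∈ S, ω e = true}) :=
        measure_biUnion_finset_le _ _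
    _ ≤ ∑ F ∈ 𝒜, ∑ S ∈ F.sym2.powersetCard (tf F.card), gnp n p {ω | ∀ e ∈ S, ω e = true} :=
        Finset.sum_le_sum fun F _ => measure_biUnion_finset_le _ _
    _ ≤ ∑ F ∈ 𝒜, ENNReal.ofReal (g F.card) := by
        apply Finset.sum_le_sum
        intro F hF
        have hsum : ∑ S ∈ F.sym2.powersetCard (tf F.card), gnp n p {ω | ∀ e ∈ S, ω e = true}
            = (F.sym2.card.choose (tf F.card)) • ((ENNReal.ofReal p) ^ (tf F.card)) := by
          rw [← Finset.card_powersetCard, ← Finset.sum_const]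
          apply Finset.sum_congr rfl
          intro S hS
          rw [gnp_cyl n p hp1 S, (Finset.mem_powersetCard.1 hS).2]
        rw [hsum]
        rcases Nat.eq_zero_or_pos F.card with hc | hc
        · -- empty set: the binomial coefficient is zero
          have hFe : F = ∅ := Finset.card_eq_zero.mp hc
          have : F.sym2.card = 0 := by rw [hFe]; simp
          rw [this, hc]
          have ht1 : 0 < tf 0 := Nat.succ_pos _
          rw [Nat.choose_eq_zero_of_lt ht1]
          simp
        · -- nonempty: use term_bound
          have ha : 1 ≤ F.card := hc
          have hap : (F.card : ℝ) * p ≤ 100 := by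
            rw [h𝒜, Finset.mem_filter] at hF
            have := hF.2
            rw [le_div_iff₀ hp0] at this
            exact this
          have hN : (F.sym2.card : ℝ) ≤ (F.card : ℝ)^2 := by
            have h1 : F.sym2.card = (F.card + 1).choose 2 := Finset.card_sym2 F
            have h2 : (F.card + 1).choose 2 ≤ F.card ^ 2 := by
              rw [Nat.choose_two_right]
              apply Nat.div_le_of_le_mul
              rw [Nat.add_sub_cancel]
              nlinarith
            rw [h1]
            exact_mod_cast h2
          have hb := term_bound n F.card F.sym2.card p hp0 ha hN hap hlog hpn
          have hgF : g F.card = (((n:ℝ)^36)⁻¹) ^ F.card := by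
            rw [hg]; simp [Nat.pos_iff_ne_zero.mp hc]
          rw [hgF]
          calc (F.sym2.card.choose (tf F.card)) • ((ENNReal.ofReal p) ^ (tf F.card))
              = ENNReal.ofReal ((F.sym2.card.choose (tf F.card) : ℝ) * p ^ (tf F.card)) := by
                rw [ENNReal.ofReal_mul (by positivity), ENNReal.ofReal_pow hp0.le,
                  ENNReal.ofReal_natCast, nsmul_eq_mul]
            _ ≤ ENNReal.ofReal ((((n:ℝ)^36)⁻¹) ^ F.card) := ENNReal.ofReal_le_ofReal hb
    _ ≤ ∑ F ∈ (Finset.univ : Finset (Fin n)).powerset, ENNReal.ofReal (g F.card) :=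
        Finset.sum_le_sum_of_subset (Finset.filter_subset _ _)
    _ = ENNReal.ofReal (∑ F ∈ (Finset.univ : Finset (Fin n)).powerset, g F.card) := by
        rw [ENNReal.ofReal_sum_of_nonneg]
        intro F _
        rw [hg]
        dsimp only
        split_ifs
        · exact le_refl _
        · positivity
    _ ≤ ENNReal.ofReal (n:ℝ)⁻¹ := ENNReal.ofReal_le_ofReal (sum_g n hn2)


/-- If `p ≫ ((log n)/n)^{1/2}`, then a.a.s. every set `A`
with `|A| ≤ 100/p` satisfies `2 e(A) ≤ p²n|A|/4`. -/
theorem stmt_10 (p : ℕ → ℝ) (hp : ∀ n, 0 ≤ p n ∧ p n ≤ 1)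
    (hgrow : Tendsto (fun n : ℕ => p n / Real.sqrt (Real.log n / n)) atTop atTop) :
    Tendsto (fun n : ℕ => gnp n (p n)
      {ω | ∀ A : Set (Fin n), (A.ncard : ℝ) ≤ 100 / p n →
              2 * (edgesWithin (graphOf ω) A : ℝ) ≤ p n ^ 2 * n * A.ncard / 4})
      atTop (𝓝 1) := by
  set bad : (n : ℕ) → Set (Sym2 (Fin n) → Bool) := fun n =>
    {ω | ¬ ∀ A : Set (Fin n), (A.ncard : ℝ) ≤ 100 / p n →
        2 * (edgesWithin (graphOf ω) A : ℝ) ≤ p n ^ 2 * n * A.ncard / 4} with hbad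
  have key : ∀ᶠ n in atTop, gnp n (p n) (bad n) ≤ ENNReal.ofReal (n:ℝ)⁻¹ := by
    have h1 : ∀ᶠ n in atTop, 12 ≤ p n / Real.sqrt (Real.log n / n) :=
      hgrow.eventually_ge_atTop 12
    have h2 : ∀ᶠ n : ℕ in atTop, 200 ≤ Real.log n :=
      (Real.tendsto_log_atTop.comp tendsto_natCast_atTop_atTop).eventually_ge_atTop 200
    filter_upwards [h1, h2] with n h12 hlog
    have hn1 : (1:ℝ) ≤ (n:ℝ) := by
      by_contra h
      have := Real.log_nonpos (by positivity) (le_of_not_ge h)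
      linarith
    have hn0 : (0:ℝ) < n := by linarith
    have hlogpos : (0:ℝ) < Real.log n := by linarith
    set s : ℝ := Real.sqrt (Real.log n / n) with hs
    have spos : 0 < s := Real.sqrt_pos.2 (div_pos hlogpos hn0)
    have hps : 12 * s ≤ p n := by
      rw [le_div_iff₀ spos] at h12
      linarith
    have hp0 : 0 < p n := lt_of_lt_of_le (by positivity) hps
    have hpn : 144 * Real.log n ≤ p n ^ 2 * n := by
      have hs2 : s ^ 2 = Real.log n / n := Real.sq_sqrt (div_pos hlogpos hn0).le
      have hsq : (12 * s) ^ 2 ≤ p n ^ 2 := by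
        apply pow_le_pow_left₀ (by positivity) hps
      have h144 : 144 * (Real.log n / n) ≤ p n ^ 2 := by
        calc 144 * (Real.log n / n) = (12 * s)^2 := by rw [mul_pow, hs2]; ring
          _ ≤ p n ^ 2 := hsq
      have := mul_le_mul_of_nonneg_right h144 hn0.le
      calc 144 * Real.log n = 144 * (Real.log n / n) * n := by field_simp
        _ ≤ p n ^ 2 * n := this
    exact le_trans (measure_mono (bad_subset n (p n) hp0))
      (union_bound n (p n) hp0 (hp n).2 hlog hpn)
  have hupper : Tendsto (fun n : ℕ => ENNReal.ofReal (n:ℝ)⁻¹) atTop (𝓝 0) := by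
    have := ENNReal.tendsto_ofReal (tendsto_inv_atTop_nhds_zero_nat)
    simpa using this
  have hbad0 : Tendsto (fun n => gnp n (p n) (bad n)) atTop (𝓝 0) :=
    tendsto_of_tendsto_of_tendsto_of_le_of_le' tendsto_const_nhds hupper
      (Eventually.of_forall fun n => zero_le) key
  have hgood : ∀ n, gnp n (p n)
      {ω | ∀ A : Set (Fin n), (A.ncard : ℝ) ≤ 100 / p n →
          2 * (edgesWithin (graphOf ω) A : ℝ) ≤ p n ^ 2 * n * A.ncard / 4}
      = 1 - gnp n (p n) (bad n) := by
    intro n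
    have hc : {ω : Sym2 (Fin n) → Bool | ∀ A : Set (Fin n), (A.ncard : ℝ) ≤ 100 / p n →
        2 * (edgesWithin (graphOf ω) A : ℝ) ≤ p n ^ 2 * n * A.ncard / 4} = (bad n)ᶜ := by
      rw [hbad]
      ext ω
      simp only [Set.mem_compl_iff, Set.mem_setOf_eq, not_not]
    rw [hc, prob_compl_eq_one_sub ((bad n).toFinite.measurableSet)]
  simp only [hgood]
  have h := ENNReal.Tendsto.sub
    (tendsto_const_nhds : Tendsto (fun _ : ℕ => (1:ENNReal)) atTop (𝓝 1)) hbad0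
    (Or.inr (by simp))
  simpa using h

end MonochromaticTrees
end
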